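/- Let A and B be positive definite complex n×n matrices and let f : (0,∞) → (0,∞) be a continuous function that is operator monotone decreasing and operator log-convex. Then f(A + B) ≤ f((3A + B)/2) ♯ f((A + 3B)/2) ≤ f(2A) ♯ f(2B) ≤ f(2A) ∇ f(2B) ≤ f(A) ∇ f(B) in the Loewner order, where ♯ and ∇ denote the (unweighted, t = 1/2) geometric and arithmetic means. -/

import Mathlib

open Matrix ComplexOrder

/-- Real power of a matrix via the continuous functional calculus
(for a positive definite matrix this is the usual functional-calculus power). -/
noncomputable def mpow {n : ℕ} (A : Matrix (Fin n) (Fin n) ℂ) (t : ℝ) :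
    Matrix (Fin n) (Fin n) ℂ :=
  cfc (fun x : ℝ => x ^ t) A

/-- The weighted geometric mean `A ♯ₜ B = A^{1/2} (A^{-1/2} B A^{-1/2})^t A^{1/2}`. -/
noncomputable def gm {n : ℕ} (t : ℝ) (A B : Matrix (Fin n) (Fin n) ℂ) :
    Matrix (Fin n) (Fin n) ℂ :=
  mpow A (1/2) * mpow (mpow A (-(1/2)) * B * mpow A (-(1/2))) t * mpow A (1/2)

/-- The weighted arithmetic mean `A ∇ₜ B = (1-t)A + tB`. -/
noncomputable def am {n : ℕ} (t : ℝ) (A B : Matrix (Fin n) (Fin n) ℂ) :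
    Matrix (Fin n) (Fin n) ℂ :=
  (1 - t) • A + t • B

/-- The weighted harmonic mean `A !ₜ B = ((1-t)A⁻¹ + tB⁻¹)⁻¹`. -/
noncomputable def hm {n : ℕ} (t : ℝ) (A B : Matrix (Fin n) (Fin n) ℂ) :
    Matrix (Fin n) (Fin n) ℂ :=
  ((1 - t) • A⁻¹ + t • B⁻¹)⁻¹

/-- The Loewner order: `X ≤ Y` iff `Y - X` is positive semidefinite. -/
noncomputable def loewnerLE {n : ℕ} (X Y : Matrix (Fin n) (Fin n) ℂ) : Prop :=
  (Y - X).PosSemidef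

namespace StmtAux

variable {n : ℕ}


variable {n : ℕ}

abbrev M (n : ℕ) := Matrix (Fin n) (Fin n) ℂ

lemma sa_of_herm {A : M n} (hA : A.IsHermitian) : IsSelfAdjoint A := hA

lemma contOn' (f : ℝ → ℝ) {s : Set ℝ} (hs : s.Finite) : ContinuousOn f s :=
  have : Finite s := hs.to_subtype
  have : DiscreteTopology s := Finite.instDiscreteTopology
  continuousOn_iff_continuous_restrict.2 continuous_of_discreteTopology

lemma contOn (f : ℝ → ℝ) (A : M n) : ContinuousOn f (spectrum ℝ A) :=
  contOn' f A.finite_real_spectrum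

lemma spec_pos {A : M n} (hA : A.PosDef) : ∀ x ∈ spectrum ℝ A, 0 < x := by
  intro x hx
  rw [hA.1.spectrum_real_eq_range_eigenvalues] at hx
  obtain ⟨i, rfl⟩ := hx
  exact hA.eigenvalues_pos i

lemma posDef_conj {D : M n} (hD : D.PosDef) (U : M n) (hU : IsUnit U.det) :
    (U * D * Uᴴ).PosDef := by
  refine .of_dotProduct_mulVec_pos (isHermitian_mul_mul_conjTranspose U hD.1) fun x hx => ?_
  have h1 : star x ⬝ᵥ (U * D * Uᴴ) *ᵥ x = star (Uᴴ *ᵥ x) ⬝ᵥ D *ᵥ (Uᴴ *ᵥ x) := by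
    rw [star_mulVec, conjTranspose_conjTranspose, ← Matrix.mulVec_mulVec,
      ← Matrix.mulVec_mulVec, Matrix.dotProduct_mulVec (star x), Matrix.dotProduct_mulVec,
      Matrix.vecMul_vecMul]
  rw [h1]
  refine hD.dotProduct_mulVec_pos (fun h => hx ?_)
  have hinj : Function.Injective (Uᴴ.mulVec) :=
    mulVec_injective_iff_isUnit.2 (by simpa [isUnit_iff_isUnit_det] using hU)
  simpa using hinj (h.trans (Matrix.mulVec_zero _).symm)


variable {n : ℕ}

lemma cfc_herm (f : ℝ → ℝ) (A : M n) : (cfc f A).IsHermitian :=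
  cfc_predicate f A

lemma cfc_posDef {A : M n} (hA : A.PosDef) {f : ℝ → ℝ}
    (hf : ∀ x ∈ spectrum ℝ A, 0 < f x) : (cfc f A).PosDef := by
  rw [hA.1.cfc_eq]
  unfold Matrix.IsHermitian.cfc
  refine posDef_conj ?_ _ ?_
  · rw [Matrix.posDef_diagonal_iff]
    intro i
    have := hf _ (hA.1.eigenvalues_mem_spectrum_real i)
    simpa [Function.comp] using (RCLike.ofReal_pos (K := ℂ)).mpr this
  · set u := hA.1.eigenvectorUnitary with hu
    exact (isUnit_iff_isUnit_det _).mp ⟨⟨(u : M n), star (u : M n), u.2.2, u.2.1⟩, rfl⟩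

lemma mpow_herm {A : M n} (t : ℝ) : (mpow A t).IsHermitian := cfc_herm _ _

lemma mpow_posDef {A : M n} (hA : A.PosDef) (t : ℝ) : (mpow A t).PosDef :=
  cfc_posDef hA fun x hx => Real.rpow_pos_of_pos (spec_pos hA x hx) t

lemma mpow_add {A : M n} (hA : A.PosDef) (s t : ℝ) :
    mpow A s * mpow A t = mpow A (s + t) := by
  unfold mpow
  rw [← cfc_mul _ _ A (contOn _ _) (contOn _ _)]
  exact cfc_congr fun x hx => (Real.rpow_add (spec_pos hA x hx) s t).symm

lemma mpow_one {A : M n} (hA : A.PosDef) : mpow A 1 = A := by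
  unfold mpow
  simp only [Real.rpow_one]
  exact cfc_id ℝ A hA.1

lemma mpow_zero {A : M n} (hA : A.PosDef) : mpow A 0 = 1 := by
  unfold mpow
  simp only [Real.rpow_zero]
  exact cfc_const_one ℝ A hA.1

lemma mpow_mpow {A : M n} (hA : A.PosDef) (s t : ℝ) :
    mpow (mpow A s) t = mpow A (s * t) := by
  unfold mpow
  rw [← cfc_comp (fun x : ℝ => x ^ t) (fun x : ℝ => x ^ s) A (sa_of_herm hA.1)
    (contOn' _ ((Matrix.finite_real_spectrum (A := A)).image _)) (contOn _ _)]
  exact cfc_congr fun x hx => by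
    simp [Function.comp, ← Real.rpow_mul (spec_pos hA x hx).le]

lemma mpow_neg {A : M n} (hA : A.PosDef) (t : ℝ) : mpow A (-t) = (mpow A t)⁻¹ := by
  symm
  apply Matrix.inv_eq_right_inv
  rw [mpow_add hA, add_neg_cancel, mpow_zero hA]


variable {n : ℕ}

lemma real_smul_eq {r : ℝ} {A : M n} : r • A = (r : ℂ) • A := by
  ext i j
  simp [Complex.real_smul]

lemma psd_smul {A : M n} (h : A.PosSemidef) {r : ℝ} (hr : 0 ≤ r) :
    (r • A).PosSemidef := by
  rw [real_smul_eq]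
  refine .of_dotProduct_mulVec_nonneg ?_ ?_
  · have : star (r : ℂ) = (r : ℂ) := by simp [Complex.star_def, Complex.conj_ofReal]
    simp only [IsHermitian, conjTranspose_smul, this, h.1.eq]
  · intro x
    rw [smul_mulVec, dotProduct_smul, smul_eq_mul]
    exact mul_nonneg (by exact_mod_cast hr) (h.dotProduct_mulVec_nonneg x)

lemma posDef_smul {A : M n} (h : A.PosDef) {r : ℝ} (hr : 0 < r) :
    (r • A).PosDef := by
  rw [real_smul_eq]
  refine .of_dotProduct_mulVec_pos ?_ ?_
  · have : star (r : ℂ) = (r : ℂ) := by simp [Complex.star_def, Complex.conj_ofReal]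
    simp only [IsHermitian, conjTranspose_smul, this, h.1.eq]
  · intro x hx
    rw [smul_mulVec, dotProduct_smul, smul_eq_mul]
    have := h.dotProduct_mulVec_pos hx
    exact mul_pos (by exact_mod_cast hr) this

lemma lo_refl (A : M n) : loewnerLE A A := by
  simp only [loewnerLE, sub_self]
  exact Matrix.PosSemidef.zero

lemma lo_trans {A B C : M n} (h1 : loewnerLE A B) (h2 : loewnerLE B C) :
    loewnerLE A C := by
  have := h2.add h1
  simpa only [loewnerLE, sub_add_sub_cancel] using this

lemma lo_add {A B C D : M n} (h1 : loewnerLE A B) (h2 : loewnerLE C D) :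
    loewnerLE (A + C) (B + D) := by
  have := h1.add h2
  simpa only [loewnerLE, add_sub_add_comm] using this

lemma lo_smul {A B : M n} (h : loewnerLE A B) {r : ℝ} (hr : 0 ≤ r) :
    loewnerLE (r • A) (r • B) := by
  have := psd_smul h hr
  simpa only [loewnerLE, smul_sub] using this

lemma lo_conj {A B : M n} (h : loewnerLE A B) {P : M n} (hP : P.IsHermitian) :
    loewnerLE (P * A * P) (P * B * P) := by
  have := h.mul_mul_conjTranspose_same P
  rw [hP] at this
  simpa only [loewnerLE, Matrix.mul_sub, Matrix.sub_mul] using this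


variable {n : ℕ}

lemma herm_dot {T : M n} (hT : T.IsHermitian) (v w : Fin n → ℂ) :
    star v ⬝ᵥ (T *ᵥ w) = star (T *ᵥ v) ⬝ᵥ w := by
  rw [star_mulVec, Matrix.dotProduct_mulVec, hT.eq]

lemma sub_psd_of_sq {S T : M n} (hS : S.IsHermitian) (hT : T.PosDef)
    (h : (T * T - S * S).PosSemidef) : (T - S).PosSemidef := by
  have hD : (T - S).IsHermitian := hT.1.sub hS
  apply hD.posSemidef_iff_eigenvalues_nonneg.mpr
  intro i
  by_contra hneg
  push_neg at hneg
  rw [Pi.zero_apply] at hneg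
  set μ : ℝ := hD.eigenvalues i with hμ
  set v : Fin n → ℂ := ⇑(hD.eigenvectorBasis i) with hv
  have hv0 : v ≠ 0 := by
    have := hD.eigenvectorBasis.orthonormal.ne_zero i
    intro hc
    apply this
    ext j
    exact congrFun hc j
  have heig : (T - S) *ᵥ v = (μ : ℂ) • v := by
    rw [hD.mulVec_eigenvectorBasis i]
    ext j
    simp only [Pi.smul_apply, Complex.real_smul, smul_eq_mul]
    rfl
  have hSv : S *ᵥ v = T *ᵥ v - (μ : ℂ) • v := by
    rw [Matrix.sub_mulVec, sub_eq_iff_eq_add] at heig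
    rw [heig]
    abel
  set w : Fin n → ℂ := T *ᵥ v with hw
  set c : ℂ := star v ⬝ᵥ w with hc
  have hcpos : 0 < c := hT.dotProduct_mulVec_pos hv0
  have hwv : star w ⬝ᵥ v = c := by
    rw [hc, hw, herm_dot hT.1]
  set r : ℂ := star v ⬝ᵥ v with hr
  have hrnn : 0 ≤ r := by rw [hr]; simp
  have hq : 0 ≤ star v ⬝ᵥ ((T * T - S * S) *ᵥ v) := h.dotProduct_mulVec_nonneg v
  have hqval : star v ⬝ᵥ ((T * T - S * S) *ᵥ v)
      = 2 * (μ : ℂ) * c - (μ : ℂ) ^ 2 * r := by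
    rw [Matrix.sub_mulVec, dotProduct_sub, ← Matrix.mulVec_mulVec,
      ← Matrix.mulVec_mulVec, herm_dot hT.1, herm_dot hS, hSv]
    simp only [star_sub, star_smul, sub_dotProduct, dotProduct_sub,
      smul_dotProduct, dotProduct_smul, ← hw]
    rw [hwv]
    have : star ((μ : ℂ)) = (μ : ℂ) := by simp [Complex.star_def, Complex.conj_ofReal]
    rw [this, ← hc, ← hr]
    simp only [smul_eq_mul]
    ring
  rw [hqval] at hq
  have hqre : (0:ℝ) ≤ (2 * (μ : ℂ) * c - (μ : ℂ) ^ 2 * r).re := by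
    rw [Complex.le_def] at hq
    simpa using hq.1
  have h1 : (2 * (μ : ℂ) * c).re = 2 * μ * c.re := by
    have : 2 * (μ : ℂ) * c = ((2 * μ : ℝ) : ℂ) * c := by push_cast; ring
    rw [this, Complex.re_ofReal_mul]
    try ring
  have h2 : ((μ : ℂ) ^ 2 * r).re = μ ^ 2 * r.re := by
    have : (μ : ℂ) ^ 2 * r = ((μ ^ 2 : ℝ) : ℂ) * r := by push_cast; ring
    rw [this, Complex.re_ofReal_mul]
  rw [Complex.sub_re, h1, h2] at hqre
  have hcre : 0 < c.re := by
    rw [Complex.lt_def] at hcpos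
    simpa using hcpos.1
  have hrre : 0 ≤ r.re := by
    rw [Complex.le_def] at hrnn
    simpa using hrnn.1
  nlinarith

lemma sqrt_mono {X Y : M n} (hX : X.PosDef) (hY : Y.PosDef) (h : loewnerLE X Y) :
    loewnerLE (mpow X (1/2)) (mpow Y (1/2)) := by
  apply sub_psd_of_sq (mpow_herm _) (mpow_posDef hY _)
  rw [mpow_add hX, mpow_add hY]
  norm_num
  rw [mpow_one hX, mpow_one hY]
  exact h


lemma posDef_conj' {D : M n} (hD : D.PosDef) {U : M n} (hU : U.PosDef) :
    (U * D * U).PosDef := by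
  have := posDef_conj hD U (hU.det_pos.ne').isUnit
  rwa [hU.1.eq] at this

lemma PN {X : M n} (hX : X.PosDef) : mpow X (1/2) * mpow X (-(1/2)) = 1 := by
  rw [mpow_add hX]; norm_num; exact mpow_zero hX

lemma NP {X : M n} (hX : X.PosDef) : mpow X (-(1/2)) * mpow X (1/2) = 1 := by
  rw [mpow_add hX]; norm_num; exact mpow_zero hX

lemma PP {X : M n} (hX : X.PosDef) : mpow X (1/2) * mpow X (1/2) = X := by
  rw [mpow_add hX]; norm_num; exact mpow_one hX

lemma NN {X : M n} (hX : X.PosDef) : mpow X (-(1/2)) * mpow X (-(1/2)) = X⁻¹ := by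
  rw [mpow_add hX]
  have : (-(1/2) + -(1/2) : ℝ) = -1 := by norm_num
  rw [this, mpow_neg hX, mpow_one hX]

lemma C_posDef {X Y : M n} (hX : X.PosDef) (hY : Y.PosDef) :
    (mpow X (-(1/2)) * Y * mpow X (-(1/2))).PosDef :=
  posDef_conj' hY (mpow_posDef hX _)

lemma gm_posDef {X Y : M n} (hX : X.PosDef) (hY : Y.PosDef) (t : ℝ) :
    (gm t X Y).PosDef :=
  posDef_conj' (mpow_posDef (C_posDef hX hY) t) (mpow_posDef hX _)

lemma gm_riccati {X Y : M n} (hX : X.PosDef) (hY : Y.PosDef) :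
    gm (1/2) X Y * X⁻¹ * gm (1/2) X Y = Y := by
  have hC : (mpow X (-(1/2)) * Y * mpow X (-(1/2))).PosDef := C_posDef hX hY
  set N := mpow X (-(1/2)) with hN
  set P := mpow X (1/2) with hP
  set R := mpow (N * Y * N) (1/2) with hR
  have hRRC : R * R = N * Y * N := PP hC
  show P * R * P * X⁻¹ * (P * R * P) = Y
  rw [← NN hX]
  calc P * R * P * (N * N) * (P * R * P)
      = P * R * ((P * N) * (N * P)) * R * P := by noncomm_ring
  _ = P * (R * R) * P := by rw [PN hX, NP hX, one_mul]; noncomm_ring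
  _ = (P * N) * Y * (N * P) := by rw [hRRC]; noncomm_ring
  _ = Y := by rw [PN hX, NP hX, one_mul, mul_one]

lemma riccati_unique {X G₁ G₂ : M n} (hX : X.PosDef) (h₁ : G₁.PosDef) (h₂ : G₂.PosDef)
    (he : G₁ * X⁻¹ * G₁ = G₂ * X⁻¹ * G₂) : G₁ = G₂ := by
  set N := mpow X (-(1/2)) with hN
  set P := mpow X (1/2) with hP
  have hNposd : N.PosDef := mpow_posDef hX _
  have hK₁ : (N * G₁ * N).PosDef := posDef_conj' h₁ hNposd
  have hK₂ : (N * G₂ * N).PosDef := posDef_conj' h₂ hNposd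
  have hNN' : N * N = X⁻¹ := NN hX
  have hsq : (N * G₁ * N) ^ 2 = (N * G₂ * N) ^ 2 := by
    have e : ∀ G : M n, (N * G * N) ^ 2 = N * (G * X⁻¹ * G) * N := fun G => by
      rw [pow_two, ← hNN']
      noncomm_ring
    rw [e, e, he]
  have hK : N * G₁ * N = N * G₂ * N :=
    open scoped MatrixOrder in
    (CFC.sq_eq_sq_iff _ _ hK₁.posSemidef.nonneg hK₂.posSemidef.nonneg).mp hsq
  have hrec : ∀ G : M n, P * (N * G * N) * P = G := fun G => by
    calc P * (N * G * N) * P = (P * N) * G * (N * P) := by noncomm_ring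
    _ = G := by rw [PN hX, NP hX, one_mul, mul_one]
  rw [← hrec G₁, ← hrec G₂, hK]

lemma gm_eq {X Y G : M n} (hX : X.PosDef) (hY : Y.PosDef) (hG : G.PosDef)
    (h : G * X⁻¹ * G = Y) : gm (1/2) X Y = G :=
  riccati_unique hX (gm_posDef hX hY _) hG (by rw [gm_riccati hX hY, h])

lemma gm_comm {X Y : M n} (hX : X.PosDef) (hY : Y.PosDef) :
    gm (1/2) X Y = gm (1/2) Y X := by
  symm
  set G := gm (1/2) X Y with hG
  have hGpd : G.PosDef := gm_posDef hX hY _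
  have hGR : G * X⁻¹ * G = Y := gm_riccati hX hY
  apply gm_eq hY hX hGpd
  have hYinv : Y⁻¹ = G⁻¹ * X * G⁻¹ := by
    rw [← hGR, Matrix.mul_inv_rev, Matrix.mul_inv_rev,
      Matrix.nonsing_inv_nonsing_inv _ ((isUnit_iff_isUnit_det X).mp hX.isUnit), mul_assoc]
  rw [hYinv]
  calc G * (G⁻¹ * X * G⁻¹) * G = (G * G⁻¹) * X * (G⁻¹ * G) := by noncomm_ring
  _ = X := by
    rw [Matrix.mul_nonsing_inv _ ((isUnit_iff_isUnit_det G).mp hGpd.isUnit),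
      Matrix.nonsing_inv_mul _ ((isUnit_iff_isUnit_det G).mp hGpd.isUnit), one_mul, mul_one]

lemma gm_conj {X Y Mm : M n} (hX : X.PosDef) (hY : Y.PosDef) (hM : Mm.PosDef) :
    gm (1/2) (Mm * X * Mm) (Mm * Y * Mm) = Mm * gm (1/2) X Y * Mm := by
  have hX' : (Mm * X * Mm).PosDef := posDef_conj' hX hM
  have hY' : (Mm * Y * Mm).PosDef := posDef_conj' hY hM
  set G := gm (1/2) X Y with hG
  have hGpd : G.PosDef := gm_posDef hX hY _
  have hGR : G * X⁻¹ * G = Y := gm_riccati hX hY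
  apply gm_eq hX' hY' (posDef_conj' hGpd hM)
  have hMdet : IsUnit Mm := hM.isUnit
  have hMM : Mm * Mm⁻¹ = 1 := Matrix.mul_nonsing_inv _ ((isUnit_iff_isUnit_det Mm).mp hMdet)
  have hMM' : Mm⁻¹ * Mm = 1 := Matrix.nonsing_inv_mul _ ((isUnit_iff_isUnit_det Mm).mp hMdet)
  have hinv : (Mm * X * Mm)⁻¹ = Mm⁻¹ * X⁻¹ * Mm⁻¹ := by
    rw [Matrix.mul_inv_rev, Matrix.mul_inv_rev, mul_assoc]
  rw [hinv, ← hGR]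
  calc Mm * G * Mm * (Mm⁻¹ * X⁻¹ * Mm⁻¹) * (Mm * G * Mm)
      = Mm * G * (Mm * Mm⁻¹) * X⁻¹ * (Mm⁻¹ * Mm) * G * Mm := by noncomm_ring
  _ = Mm * (G * X⁻¹ * G) * Mm := by rw [hMM, hMM']; noncomm_ring

variable {n : ℕ}

lemma gm_mono_right {X Y Y' : M n} (hX : X.PosDef) (hY : Y.PosDef) (hY' : Y'.PosDef)
    (h : loewnerLE Y Y') : loewnerLE (gm (1/2) X Y) (gm (1/2) X Y') := by
  have hC : (mpow X (-(1/2)) * Y * mpow X (-(1/2))).PosDef := C_posDef hX hY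
  have hC' : (mpow X (-(1/2)) * Y' * mpow X (-(1/2))).PosDef := C_posDef hX hY'
  have h1 := lo_conj h (mpow_herm (A := X) (-(1/2)))
  have h2 := sqrt_mono hC hC' h1
  exact lo_conj h2 (mpow_herm (A := X) (1/2))

lemma gm_mono_left {X X' Y : M n} (hX : X.PosDef) (hX' : X'.PosDef) (hY : Y.PosDef)
    (h : loewnerLE X X') : loewnerLE (gm (1/2) X Y) (gm (1/2) X' Y) := by
  rw [gm_comm hX hY, gm_comm hX' hY]
  exact gm_mono_right hY hX hX' h

lemma mpow_gm {C : M n} (hC : C.PosDef) (a b : ℝ) :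
    gm (1/2) (mpow C a) (mpow C b) = mpow C ((a + b) / 2) := by
  unfold gm
  rw [mpow_mpow hC a (1/2), mpow_mpow hC a (-(1/2)), mpow_add hC, mpow_add hC,
    mpow_mpow hC, mpow_add hC, mpow_add hC]
  exact congrArg (mpow C) (by ring)

lemma gm_interp {X Y : M n} (hX : X.PosDef) (hY : Y.PosDef) :
    gm (1/2) (gm (1/4) X Y) (gm (3/4) X Y) = gm (1/2) X Y := by
  have hC : (mpow X (-(1/2)) * Y * mpow X (-(1/2))).PosDef := C_posDef hX hY
  have hP : (mpow X (1/2)).PosDef := mpow_posDef hX _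
  have h14 : gm (1/4) X Y = mpow X (1/2) * mpow (mpow X (-(1/2)) * Y * mpow X (-(1/2))) (1/4)
      * mpow X (1/2) := rfl
  have h34 : gm (3/4) X Y = mpow X (1/2) * mpow (mpow X (-(1/2)) * Y * mpow X (-(1/2))) (3/4)
      * mpow X (1/2) := rfl
  rw [h14, h34, gm_conj (mpow_posDef hC _) (mpow_posDef hC _) hP, mpow_gm hC]
  norm_num
  rfl

lemma gm_le_am {X Y : M n} (hX : X.PosDef) (hY : Y.PosDef) :
    loewnerLE (gm (1/2) X Y) (am (1/2) X Y) := by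
  have hC : (mpow X (-(1/2)) * Y * mpow X (-(1/2))).PosDef := C_posDef hX hY
  set N := mpow X (-(1/2)) with hN
  set P := mpow X (1/2) with hP
  set R := mpow (N * Y * N) (1/2) with hR
  have hRH : R.IsHermitian := mpow_herm _
  have hPH : P.IsHermitian := mpow_herm _
  have hRRC : R * R = N * Y * N := PP hC
  have key : am (1/2) X Y - gm (1/2) X Y = P * ((2:ℝ)⁻¹ • ((R - 1) * (R - 1))) * P := by
    have hXPP : X = P * P := (PP hX).symm
    have hYP : Y = P * (R * R) * P := by
      rw [hRRC]
      calc Y = (P * N) * Y * (N * P) := by rw [PN hX, NP hX, one_mul, mul_one]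
      _ = P * (N * Y * N) * P := by noncomm_ring
    have e0 : am (1/2) X Y - gm (1/2) X Y
        = (1 - 1/2 : ℝ) • (P * P) + (1/2 : ℝ) • (P * (R * R) * P) - P * R * P := by
      rw [← hXPP, ← hYP]; rfl
    have e1 : P * ((R - 1) * (R - 1)) * P = P * (R * R) * P - P * R * P - P * R * P + P * P := by
      noncomm_ring
    rw [e0, Matrix.mul_smul, Matrix.smul_mul, e1]
    module
  show (am (1/2) X Y - gm (1/2) X Y).PosSemidef
  rw [key]
  have h1 : ((R - 1) * (R - 1)).PosSemidef := by
    have hsub : (R - 1).IsHermitian := hRH.sub (isHermitian_one)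
    have := Matrix.posSemidef_conjTranspose_mul_self (R - 1)
    rwa [hsub.eq] at this
  have h2 : ((2:ℝ)⁻¹ • ((R - 1) * (R - 1))).PosSemidef := psd_smul h1 (by norm_num)
  have := h2.mul_mul_conjTranspose_same P
  rwa [hPH.eq] at this


end StmtAux

/-- Refined subadditivity for operator monotone decreasing (equivalently operator log-convex)
functions: `f(A+B) ≤ f((3A+B)/2) ♯ f((A+3B)/2) ≤ f(2A) ♯ f(2B) ≤ f(2A) ∇ f(2B) ≤ f(A) ∇ f(B)`. -/
theorem stmt2 {n : ℕ} (A B : Matrix (Fin n) (Fin n) ℂ) (hA : A.PosDef) (hB : B.PosDef)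
    (f : ℝ → ℝ) (hf_cont : ContinuousOn f (Set.Ioi 0))
    (hf_pos : ∀ x ∈ Set.Ioi (0 : ℝ), 0 < f x)
    (hf_dec : ∀ X Y : Matrix (Fin n) (Fin n) ℂ, X.PosDef → Y.PosDef →
      loewnerLE X Y → loewnerLE (cfc f Y) (cfc f X))
    (hf_logcvx : ∀ X Y : Matrix (Fin n) (Fin n) ℂ, X.PosDef → Y.PosDef →
      ∀ t ∈ Set.Icc (0 : ℝ) 1, loewnerLE (cfc f (am t X Y)) (gm t (cfc f X) (cfc f Y))) :
    loewnerLE (cfc f (A + B))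
      (gm (1/2) (cfc f ((2 : ℝ)⁻¹ • ((3 : ℝ) • A + B))) (cfc f ((2 : ℝ)⁻¹ • (A + (3 : ℝ) • B)))) ∧
    loewnerLE
      (gm (1/2) (cfc f ((2 : ℝ)⁻¹ • ((3 : ℝ) • A + B))) (cfc f ((2 : ℝ)⁻¹ • (A + (3 : ℝ) • B))))
      (gm (1/2) (cfc f ((2 : ℝ) • A)) (cfc f ((2 : ℝ) • B))) ∧
    loewnerLE (gm (1/2) (cfc f ((2 : ℝ) • A)) (cfc f ((2 : ℝ) • B)))
      (am (1/2) (cfc f ((2 : ℝ) • A)) (cfc f ((2 : ℝ) • B))) ∧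
    loewnerLE (am (1/2) (cfc f ((2 : ℝ) • A)) (cfc f ((2 : ℝ) • B)))
      (am (1/2) (cfc f A) (cfc f B)) := by
  open StmtAux in
  set W₁ : Matrix (Fin n) (Fin n) ℂ := (2 : ℝ)⁻¹ • ((3 : ℝ) • A + B) with hW₁def
  set W₂ : Matrix (Fin n) (Fin n) ℂ := (2 : ℝ)⁻¹ • (A + (3 : ℝ) • B) with hW₂def
  set A2 : Matrix (Fin n) (Fin n) ℂ := (2 : ℝ) • A with hA2def
  set B2 : Matrix (Fin n) (Fin n) ℂ := (2 : ℝ) • B with hB2def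
  have hW₁ : W₁.PosDef := posDef_smul ((posDef_smul hA (by norm_num)).add hB) (by norm_num)
  have hW₂ : W₂.PosDef := posDef_smul (hA.add (posDef_smul hB (by norm_num))) (by norm_num)
  have hA2 : A2.PosDef := posDef_smul hA (by norm_num)
  have hB2 : B2.PosDef := posDef_smul hB (by norm_num)
  have hposf : ∀ {X : Matrix (Fin n) (Fin n) ℂ} (hX : X.PosDef), (cfc f X).PosDef :=
    fun {X} hX => cfc_posDef hX (fun x hx => hf_pos x (Set.mem_Ioi.mpr (spec_pos hX x hx)))
  have hFW₁ : (cfc f W₁).PosDef := hposf hW₁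
  have hFW₂ : (cfc f W₂).PosDef := hposf hW₂
  have hFA2 : (cfc f A2).PosDef := hposf hA2
  have hFB2 : (cfc f B2).PosDef := hposf hB2
  refine ⟨?_, ?_, ?_, ?_⟩
  · -- Part 1
    have h := hf_logcvx W₁ W₂ hW₁ hW₂ (1/2) (by norm_num [Set.mem_Icc])
    have ham : am (1/2) W₁ W₂ = A + B := by
      rw [hW₁def, hW₂def]; unfold am; module
    rwa [ham] at h
  · -- Part 2
    have h₁ := hf_logcvx A2 B2 hA2 hB2 (1/4) (by norm_num [Set.mem_Icc])
    have h₂ := hf_logcvx A2 B2 hA2 hB2 (3/4) (by norm_num [Set.mem_Icc])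
    have ham₁ : am (1/4) A2 B2 = W₁ := by
      rw [hA2def, hB2def, hW₁def]; unfold am; module
    have ham₂ : am (3/4) A2 B2 = W₂ := by
      rw [hA2def, hB2def, hW₂def]; unfold am; module
    rw [ham₁] at h₁
    rw [ham₂] at h₂
    have hg₁ : (gm (1/4) (cfc f A2) (cfc f B2)).PosDef := gm_posDef hFA2 hFB2 _
    have hg₂ : (gm (3/4) (cfc f A2) (cfc f B2)).PosDef := gm_posDef hFA2 hFB2 _
    have step1 : loewnerLE (gm (1/2) (cfc f W₁) (cfc f W₂))
        (gm (1/2) (gm (1/4) (cfc f A2) (cfc f B2)) (cfc f W₂)) :=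
      gm_mono_left hFW₁ hg₁ hFW₂ h₁
    have step2 : loewnerLE (gm (1/2) (gm (1/4) (cfc f A2) (cfc f B2)) (cfc f W₂))
        (gm (1/2) (gm (1/4) (cfc f A2) (cfc f B2)) (gm (3/4) (cfc f A2) (cfc f B2))) :=
      gm_mono_right hg₁ hFW₂ hg₂ h₂
    have step3 := lo_trans step1 step2
    rwa [gm_interp hFA2 hFB2] at step3
  · -- Part 3
    exact gm_le_am hFA2 hFB2
  · -- Part 4
    have d₁ : loewnerLE (cfc f A2) (cfc f A) := by
      apply hf_dec A A2 hA hA2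
      show (A2 - A).PosSemidef
      have : A2 - A = A := by rw [hA2def]; module
      rw [this]; exact hA.posSemidef
    have d₂ : loewnerLE (cfc f B2) (cfc f B) := by
      apply hf_dec B B2 hB hB2
      show (B2 - B).PosSemidef
      have : B2 - B = B := by rw [hB2def]; module
      rw [this]; exact hB.posSemidef
    show loewnerLE ((1 - 1/2 : ℝ) • cfc f A2 + (1/2 : ℝ) • cfc f B2)
      ((1 - 1/2 : ℝ) • cfc f A + (1/2 : ℝ) • cfc f B)
    exact lo_add (lo_smul d₁ (by norm_num)) (lo_smul d₂ (by norm_num))
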